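/- Let D be a cyclic group of order 2n equipped with a quadratic form q: D → Q/2Z admitting a generator g with q(g) = 1/(2n). Then every isometry of (D, q) is of the form g ↦ ag for some a ∈ Z/2nZ with a² ≡ 1 (mod 4n), and the group of such isometries is isomorphic to (Z/2Z)^{ρ(n)}, where ρ(n) is the number of distinct prime divisors of n. -/

import Mathlib

namespace Stmt0Aux

/-- congruent mod 2N implies squares congruent mod 4N -/
lemma sq_cong {N u v : ℤ} (h : 2*N ∣ u - v) : 4*N ∣ u^2 - v^2 := by
  obtain ⟨t, ht⟩ := h
  have : u ^ 2 - v ^ 2 = (4*N) * (t * (N * t + v)) := by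
    have hu : u = 2*N*t + v := by linarith
    subst hu; ring
  exact ⟨_, this⟩

lemma val_sq_dvd_iff {m : ℕ} [NeZero m] (x : ZMod m) :
    (m : ℤ) ∣ (x.val : ℤ)^2 - 1 ↔ x * x = 1 := by
  have h : (((x.val:ℤ)^2 - 1 : ℤ) : ZMod m) = x*x - 1 := by
    push_cast [ZMod.natCast_val, ZMod.cast_id]
    ring
  rw [← ZMod.intCast_zmod_eq_zero_iff_dvd, h, sub_eq_zero]

/-- prime power divides a product where the prime can divide only one factor -/
lemma prime_pow_dvd_factor {p : ℕ} (hp : p.Prime) (e : ℕ) {a b : ℤ}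
    (hab : ¬ ((p:ℤ) ∣ a ∧ (p:ℤ) ∣ b)) (h : (p:ℤ)^e ∣ a * b) :
    (p:ℤ)^e ∣ a ∨ (p:ℤ)^e ∣ b := by
  have hpz : Prime (p:ℤ) := Nat.prime_iff_prime_int.mp hp
  by_cases hA : (p:ℤ) ∣ a
  · have hB : ¬ (p:ℤ) ∣ b := fun hb => hab ⟨hA, hb⟩
    have hc : IsCoprime ((p:ℤ)^e) b := (IsCoprime.pow_left ((hpz.coprime_iff_not_dvd).mpr hB))
    exact Or.inl (hc.dvd_of_dvd_mul_right h)
  · have hc : IsCoprime ((p:ℤ)^e) a := (IsCoprime.pow_left ((hpz.coprime_iff_not_dvd).mpr hA))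
    exact Or.inr (hc.dvd_of_dvd_mul_left h)

end Stmt0Aux
namespace Stmt0AuxB
section
variable {p : ℕ}

lemma eq_intCast_of_dvd {m : ℕ} [NeZero m] (x : ZMod m) (c : ℤ)
    (h : (m:ℤ) ∣ (x.val:ℤ) - c) : x = (c : ZMod m) := by
  have h2 := (ZMod.intCast_zmod_eq_zero_iff_dvd _ m).mpr h
  push_cast [ZMod.natCast_val, ZMod.cast_id] at h2
  rwa [sub_eq_zero] at h2

lemma card_pair_units {R : Type*} [Ring R] (h : (1:R) ≠ -1) :
    Nat.card {x : R // x = 1 ∨ x = -1} = 2 := by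
  have e : {x : R // x = 1 ∨ x = -1} ≃ ({1, -1} : Set R) :=
    Equiv.subtypeEquivRight (by intro x; simp [Set.mem_insert_iff])
  rw [Nat.card_congr e, Nat.card_coe_set_eq, Set.ncard_pair h]

/-- square roots of 1 mod odd prime power -/
lemma sq_eq_one_iff_odd_prime_pow (hp : p.Prime) (hp2 : p ≠ 2) {e : ℕ} (he : e ≠ 0)
    (x : ZMod (p^e)) : x * x = 1 ↔ x = 1 ∨ x = -1 := by
  haveI : NeZero (p^e) := ⟨pow_ne_zero _ hp.pos.ne'⟩
  constructor
  · intro hx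
    have hdvd : ((p^e : ℕ):ℤ) ∣ (x.val:ℤ)^2 - 1 := by
      rw [Stmt0Aux.val_sq_dvd_iff]; exact hx
    have hdvd' : (p:ℤ)^e ∣ ((x.val:ℤ) - 1) * ((x.val:ℤ) + 1) := by
      push_cast at hdvd ⊢
      have : ((x.val:ℤ) - 1) * ((x.val:ℤ) + 1) = (x.val:ℤ)^2 - 1 := by ring
      rw [this]; exact hdvd
    have hnot : ¬ ((p:ℤ) ∣ (x.val:ℤ) - 1 ∧ (p:ℤ) ∣ (x.val:ℤ) + 1) := by
      rintro ⟨h1, h2⟩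
      have : (p:ℤ) ∣ 2 := by
        have := dvd_sub h2 h1
        simpa using this
      have h2 : (p:ℕ) ∣ 2 := by exact_mod_cast this
      exact hp2 ((Nat.prime_dvd_prime_iff_eq hp Nat.prime_two).mp h2)
    rcases Stmt0Aux.prime_pow_dvd_factor hp e hnot hdvd' with h | h
    · left
      have := eq_intCast_of_dvd x 1 (by push_cast; exact_mod_cast h)
      simpa using this
    · right
      have := eq_intCast_of_dvd x (-1) (by push_cast; exact_mod_cast (by simpa [sub_neg_eq_add] using h))
      simpa using this
  · rintro (rfl | rfl) <;> ring

lemma card_sqrtOne_odd_prime_pow (hp : p.Prime) (hp2 : p ≠ 2) {e : ℕ} (he : e ≠ 0) :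
    Nat.card {x : ZMod (p^e) // x * x = 1} = 2 := by
  have hlt : 2 < p^e := by
    have h3 : 3 ≤ p := by
      rcases hp.two_le.lt_or_eq with h | h
      · omega
      · omega
    calc 2 < 3 := by norm_num
    _ ≤ p := h3
    _ ≤ p^e := Nat.le_self_pow he p
  haveI : Fact (2 < p^e) := ⟨hlt⟩
  haveI : NeZero (p^e) := ⟨by omega⟩
  have hne : (1 : ZMod (p^e)) ≠ -1 := by
    intro h
    exact (CharP.neg_one_ne_one (ZMod (p^e)) (p^e)) h.symm
  rw [Nat.card_congr (Equiv.subtypeEquivRight (sq_eq_one_iff_odd_prime_pow hp hp2 he))]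
  exact card_pair_units hne

/-- CRT for square roots of one -/
lemma card_sqrtOne_mul {a b : ℕ} [NeZero a] [NeZero b] (hab : a.Coprime b) :
    Nat.card {x : ZMod (a*b) // x * x = 1}
      = Nat.card {x : ZMod a // x * x = 1} * Nat.card {x : ZMod b // x * x = 1} := by
  have e := ZMod.chineseRemainder hab
  have e1 : {x : ZMod (a*b) // x * x = 1} ≃ {y : ZMod a × ZMod b // y * y = 1} :=
    e.toEquiv.subtypeEquiv (fun x => by
      change x * x = 1 ↔ e x * e x = 1
      constructor
      · intro h; rw [← map_mul, h, map_one]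
      · intro h
        have : e (x * x) = e 1 := by rw [map_mul, map_one]; exact h
        exact e.injective this)
  have e2 : {y : ZMod a × ZMod b // y * y = 1} ≃
      {u : ZMod a // u * u = 1} × {v : ZMod b // v * v = 1} := by
    refine (Equiv.subtypeEquivRight ?_).trans (Equiv.subtypeProdEquivProd)
    intro y
    rw [Prod.ext_iff]
    rfl
  rw [Nat.card_congr (e1.trans e2), Nat.card_prod]

lemma card_sqrtOne_odd {m : ℕ} (hm : Odd m) (hm0 : m ≠ 0) :
    Nat.card {x : ZMod m // x * x = 1} = 2 ^ m.primeFactors.card := by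
  induction m using Nat.recOnPosPrimePosCoprime with
  | prime_pow p e hp he =>
    have hp' : p.Prime := hp
    have hp2 : p ≠ 2 := by
      rintro rfl
      have : Even ((2:ℕ)^e) := (Nat.even_pow' (by omega)).mpr even_two
      exact (Nat.not_even_iff_odd.mpr hm) this
    rw [card_sqrtOne_odd_prime_pow hp' hp2 he.ne', Nat.primeFactors_prime_pow he.ne' hp']
    simp
  | zero => simp at hm0
  | one =>
    rw [Nat.primeFactors_one]
    simp only [Finset.card_empty, pow_zero]
    rw [Nat.card_eq_one_iff_unique]
    constructor
    · constructor; intro a b; ext; exact Subsingleton.elim _ _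
    · exact ⟨⟨1, by ring⟩⟩
  | coprime a b ha hb hab iha ihb =>
    haveI : NeZero a := ⟨by omega⟩
    haveI : NeZero b := ⟨by omega⟩
    have hoa : Odd a := by
      rcases Nat.even_or_odd a with h | h
      · exfalso; rw [Nat.odd_mul] at hm; exact (Nat.not_even_iff_odd.mpr hm.1) h
      · exact h
    have hob : Odd b := by
      rcases Nat.even_or_odd b with h | h
      · exfalso; rw [Nat.odd_mul] at hm; exact (Nat.not_even_iff_odd.mpr hm.2) h
      · exact h
    rw [card_sqrtOne_mul hab, iha hoa (by omega), ihb hob (by omega),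
      hab.primeFactors_mul, Finset.card_union_of_disjoint hab.disjoint_primeFactors, pow_add]

end
end Stmt0AuxB
namespace Stmt0AuxC
open Stmt0Aux Stmt0AuxB

/-- the 2-part count -/
lemma card_S2 (k : ℕ) :
    Nat.card {a : ZMod (2^(k+1)) // (2:ℤ)^(k+2) ∣ (a.val:ℤ)^2 - 1}
      = if k = 0 then 1 else 2 := by
  haveI : NeZero (2^(k+1)) := ⟨by positivity⟩
  have hodd : ∀ a : ZMod (2^(k+1)), (2:ℤ)^(k+2) ∣ (a.val:ℤ)^2 - 1 → ¬ (2:ℤ) ∣ (a.val:ℤ) := by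
    intro a h h2
    have h4 : (2:ℤ) ∣ (a.val:ℤ)^2 - 1 :=
      dvd_trans (dvd_pow_self 2 (Nat.succ_ne_zero (k+1))) h
    have h5 : (2:ℤ) ∣ (a.val:ℤ)^2 := h2.pow (by omega)
    have h6 : (2:ℤ) ∣ 1 := by
      have := dvd_sub h5 h4
      simpa using this
    norm_num at h6
  have key : ∀ a : ZMod (2^(k+1)), ((2:ℤ)^(k+2) ∣ (a.val:ℤ)^2 - 1) ↔ (a = 1 ∨ a = -1) := by
    intro a
    constructor
    · intro h
      have ho := hodd a h
      set v : ℤ := (a.val : ℤ) with hv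
      obtain ⟨c, hc⟩ : ∃ c : ℤ, v = 2*c + 1 := ⟨(v-1)/2, by omega⟩
      have hdvd : (2:ℤ)^k ∣ c * (c+1) := by
        have h1 : (2:ℤ)^(k+2) = 2^k * 4 := by ring
        have h2 : v^2 - 1 = (c*(c+1)) * 4 := by rw [hc]; ring
        rw [h1, h2] at h
        exact (mul_dvd_mul_iff_right (by norm_num : (4:ℤ) ≠ 0)).mp h
      have hcop : ¬ ((2:ℤ) ∣ c ∧ (2:ℤ) ∣ c + 1) := by
        rintro ⟨⟨s, hs⟩, ⟨t, ht⟩⟩; omega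
      have hk : (2:ℤ)^k ∣ c ∨ (2:ℤ)^k ∣ c + 1 := by
        have := prime_pow_dvd_factor Nat.prime_two k (by exact_mod_cast hcop)
          (by exact_mod_cast hdvd)
        exact_mod_cast this
      have hvlt : v < 2^(k+1) := by
        have := ZMod.val_lt a
        rw [hv]; exact_mod_cast this
      have hv0 : 0 ≤ v := by positivity
      rcases hk with ⟨s, hs⟩ | ⟨s, hs⟩
      · left
        have hd : (2:ℤ)^(k+1) ∣ v - 1 := ⟨s, by rw [hc]; linear_combination (2:ℤ) * hs⟩
        have : ((2^(k+1) : ℕ) : ℤ) ∣ v - 1 := by push_cast; exact hd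
        have := eq_intCast_of_dvd a 1 this
        simpa using this
      · right
        have hd : (2:ℤ)^(k+1) ∣ v + 1 := ⟨s, by rw [hc]; linear_combination (2:ℤ) * hs⟩
        have : ((2^(k+1) : ℕ) : ℤ) ∣ v - (-1) := by push_cast; simpa [sub_neg_eq_add] using hd
        have := eq_intCast_of_dvd a (-1) this
        simpa using this
    · rintro (rfl | rfl)
      · haveI : Fact (1 < 2^(k+1)) := ⟨by
          have : 2^1 ≤ 2^(k+1) := Nat.pow_le_pow_right (by norm_num) (by omega)
          omega⟩
        rw [ZMod.val_one]
        simp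
      · have h1 : (1:ℕ) ≤ 2^(k+1) := Nat.one_le_two_pow
        have hm1 : ((2^(k+1) - 1 : ℕ) : ZMod (2^(k+1))) = -1 := by
          rw [Nat.cast_sub h1, ZMod.natCast_self]
          simp
        have hvv : (-1 : ZMod (2^(k+1))).val = 2^(k+1) - 1 := by
          rw [← hm1, ZMod.val_natCast, Nat.mod_eq_of_lt (by omega)]
        rw [hvv]
        have : ((2^(k+1) - 1 : ℕ) : ℤ) = 2^(k+1) - 1 := by push_cast [h1]; ring
        rw [this]
        have hexp : ((2:ℤ)^(k+1) - 1)^2 - 1 = 2^(k+2) * (2^k - 1) := by ring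
        exact ⟨_, hexp⟩
  rcases Nat.eq_zero_or_pos k with rfl | hk
  · rw [if_pos rfl, Nat.card_eq_one_iff_unique]
    constructor
    · constructor
      intro ⟨a, ha⟩ ⟨b, hb⟩
      apply Subtype.ext
      have ha' := (key a).mp ha
      have hb' := (key b).mp hb
      have h11 : (1 : ZMod (2^(0+1))) = -1 := by decide
      rcases ha' with rfl | rfl <;> rcases hb' with rfl | rfl
      · rfl
      · exact h11
      · exact h11.symm
      · rfl
    · refine ⟨⟨1, ?_⟩⟩
      rw [key]; left; rfl
  · rw [if_neg hk.ne']
    rw [Nat.card_congr (Equiv.subtypeEquivRight key)]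
    apply card_pair_units
    intro h
    have h2 : ((2:ℕ):ZMod (2^(k+1))) = 0 := by
      have : (1:ZMod (2^(k+1))) + 1 = 0 := by linear_combination h
      rw [← this]; push_cast; ring
    rw [ZMod.natCast_eq_zero_iff] at h2
    have h4 : 4 ∣ 2^(k+1) := by
      have : 2^2 ∣ 2^(k+1) := Nat.pow_dvd_pow 2 (by omega)
      simpa using this
    have l1 := Nat.le_of_dvd (by norm_num) h2
    have l2 := Nat.le_of_dvd (by positivity) h4
    omega

end Stmt0AuxC
namespace Stmt0AuxD
open Stmt0Aux Stmt0AuxB Stmt0AuxC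

lemma dvd_iff_of_dvd_sub {a x y : ℤ} (h : a ∣ x - y) : a ∣ x - 1 ↔ a ∣ y - 1 := by
  constructor
  · intro h2
    have h3 := dvd_sub h2 h
    have : x - 1 - (x - y) = y - 1 := by ring
    rwa [this] at h3
  · intro h2
    have h3 := dvd_add h2 h
    have : y - 1 + (x - y) = x - 1 := by ring
    rwa [this] at h3

lemma coprime_mul_dvd_iff {a b z : ℤ} (h : IsCoprime a b) : a * b ∣ z ↔ a ∣ z ∧ b ∣ z := by
  constructor
  · intro hz
    exact ⟨(dvd_mul_right a b).trans hz, (dvd_mul_left b a).trans hz⟩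
  · rintro ⟨h1, h2⟩
    exact h.mul_dvd h1 h2

lemma card_S_aux (k m : ℕ) (hm : Odd m) (hm0 : m ≠ 0) :
    Nat.card {a : ZMod (2^(k+1) * m) // ((2:ℤ)^(k+2) * m) ∣ (a.val:ℤ)^2 - 1}
      = (if k = 0 then 1 else 2) * 2^m.primeFactors.card := by
  haveI : NeZero m := ⟨hm0⟩
  haveI : NeZero (2^(k+1)) := ⟨by positivity⟩
  haveI : NeZero (2^(k+1) * m) := ⟨by positivity⟩
  have h2m : ¬ 2 ∣ m := by
    rw [Nat.odd_iff] at hm; omega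
  have hco : (2^(k+1)).Coprime m :=
    Nat.Coprime.pow_left _ ((Nat.Prime.coprime_iff_not_dvd Nat.prime_two).mpr h2m)
  have hco2 : (2^(k+2)).Coprime m :=
    Nat.Coprime.pow_left _ ((Nat.Prime.coprime_iff_not_dvd Nat.prime_two).mpr h2m)
  have hcoZ : IsCoprime ((2:ℤ)^(k+2)) (m:ℤ) := by
    have := Nat.isCoprime_iff_coprime.mpr hco2
    push_cast at this
    exact this
  set e := ZMod.chineseRemainder hco with he
  have hprop : ∀ x : ZMod (2^(k+1) * m),
      ((2:ℤ)^(k+2) * m) ∣ (x.val:ℤ)^2 - 1 ↔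
      ((2:ℤ)^(k+2) ∣ (((e x).1.val:ℤ))^2 - 1 ∧ (e x).2 * (e x).2 = 1) := by
    intro x
    set v : ℕ := x.val with hv
    have hx : ((v : ℕ) : ZMod (2^(k+1)*m)) = x := ZMod.natCast_rightInverse x
    have hex : e x = ((v : ZMod (2^(k+1))), (v : ZMod m)) := by
      rw [← hx, map_natCast e]
      rfl
    have he1val : (e x).1.val = v % 2^(k+1) := by rw [hex, ZMod.val_natCast]
    have he2 : (e x).2 = (v : ZMod m) := by rw [hex]
    -- 2-part transfer
    have hmod : (2:ℤ)^(k+1) ∣ (v:ℤ) - ((v % 2^(k+1) : ℕ) : ℤ) := by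
      refine ⟨((v / 2^(k+1) : ℕ) : ℤ), ?_⟩
      have h0 := Nat.mod_add_div v (2^(k+1))
      push_cast
      push_cast at h0
      linarith
    have hsq : (2:ℤ)^(k+2) ∣ (v:ℤ)^2 - ((v % 2^(k+1) : ℕ) : ℤ)^2 := by
      have h1 := sq_cong (N := (2:ℤ)^k) (by
        have : 2 * (2:ℤ)^k = 2^(k+1) := by ring
        rw [this]; exact hmod)
      have h2 : 4 * (2:ℤ)^k = 2^(k+2) := by ring
      rwa [h2] at h1
    have hiff2 : (2:ℤ)^(k+2) ∣ (v:ℤ)^2 - 1 ↔ (2:ℤ)^(k+2) ∣ (((e x).1.val:ℤ))^2 - 1 := by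
      rw [he1val]
      exact dvd_iff_of_dvd_sub hsq
    -- odd part transfer
    have hmodm : (m:ℤ) ∣ (v:ℤ) - ((v % m : ℕ) : ℤ) := by
      refine ⟨((v / m : ℕ) : ℤ), ?_⟩
      have h0 := Nat.mod_add_div v m
      push_cast
      push_cast at h0
      linarith
    have hsqm : (m:ℤ) ∣ (v:ℤ)^2 - ((v % m : ℕ) : ℤ)^2 := by
      obtain ⟨t, ht⟩ := hmodm
      exact ⟨t * ((v:ℤ) + ((v % m : ℕ) : ℤ)), by
        have : (v:ℤ)^2 - ((v % m : ℕ) : ℤ)^2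
            = ((v:ℤ) - ((v % m : ℕ) : ℤ)) * ((v:ℤ) + ((v % m : ℕ) : ℤ)) := by ring
        rw [this, ht]; ring⟩
    have hiffm : (m:ℤ) ∣ (v:ℤ)^2 - 1 ↔ (e x).2 * (e x).2 = 1 := by
      rw [← val_sq_dvd_iff (e x).2, he2, ZMod.val_natCast]
      exact dvd_iff_of_dvd_sub hsqm
    rw [coprime_mul_dvd_iff hcoZ, hiff2, hiffm]
  have e2 : {a : ZMod (2^(k+1) * m) // ((2:ℤ)^(k+2) * m) ∣ (a.val:ℤ)^2 - 1} ≃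
      {y₁ : ZMod (2^(k+1)) // (2:ℤ)^(k+2) ∣ (y₁.val:ℤ)^2 - 1} × {y₂ : ZMod m // y₂ * y₂ = 1} := by
    refine Equiv.trans ?_ (Equiv.subtypeProdEquivProd)
    exact e.toEquiv.subtypeEquiv (fun x => by
      change _ ↔ ((2:ℤ)^(k+2) ∣ (((e x).1.val:ℤ))^2 - 1 ∧ (e x).2 * (e x).2 = 1)
      exact hprop x)
  rw [Nat.card_congr e2, Nat.card_prod, card_S2 k, card_sqrtOne_odd hm hm0]

lemma card_S (n : ℕ) (hn : 0 < n) :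
    Nat.card {a : ZMod (2*n) // (4 * (n:ℤ)) ∣ (a.val:ℤ)^2 - 1} = 2^n.primeFactors.card := by
  obtain ⟨k, m, hm, hm0, rfl⟩ : ∃ k m, Odd m ∧ m ≠ 0 ∧ n = 2^k * m := by
    refine ⟨n.factorization 2, ordCompl[2] n, ?_, ?_, ?_⟩
    · have hnd := Nat.not_dvd_ordCompl Nat.prime_two hn.ne'
      rcases Nat.even_or_odd (ordCompl[2] n) with h | h
      · exact absurd h.two_dvd hnd
      · exact h
    · exact (Nat.ordCompl_pos 2 hn.ne').ne'
    · exact (Nat.ordProj_mul_ordCompl_eq_self n 2).symm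
  have h1 : ∀ z : ℤ, ((4 * (((2^k*m : ℕ)):ℤ)) ∣ z) ↔ (((2:ℤ)^(k+2) * m) ∣ z) := by
    intro z
    have : (4 * (((2^k*m : ℕ)):ℤ)) = (2:ℤ)^(k+2) * m := by push_cast; ring
    rw [this]
  have h2 : (2 * (2^k*m)) = 2^(k+1) * m := by ring
  have e0 : {a : ZMod (2*(2^k*m)) // (4 * (((2^k*m : ℕ)):ℤ)) ∣ (a.val:ℤ)^2 - 1} ≃
      {a : ZMod (2^(k+1) * m) // ((2:ℤ)^(k+2) * m) ∣ (a.val:ℤ)^2 - 1} := by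
    refine (ZMod.ringEquivCongr h2).toEquiv.subtypeEquiv (fun x => ?_)
    rw [h1]
    have hvv : ((ZMod.ringEquivCongr h2).toEquiv x).val = x.val := ZMod.ringEquivCongr_val h2 x
    rw [hvv]
  rw [Nat.card_congr e0, card_S_aux k m hm hm0]
  rcases Nat.eq_zero_or_pos k with rfl | hk
  · simp
  · rw [if_neg hk.ne']
    have hpf : (2^k*m).primeFactors = {2} ∪ m.primeFactors := by
      rw [Nat.primeFactors_mul (by positivity) hm0,
        Nat.primeFactors_prime_pow hk.ne' Nat.prime_two]
    rw [hpf, Finset.card_union_of_disjoint (by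
      rw [Finset.disjoint_singleton_left]
      intro hmem
      exact (by rw [Nat.odd_iff] at hm; omega : ¬ 2 ∣ m) (Nat.dvd_of_mem_primeFactors hmem))]
    simp [Finset.card_singleton, pow_succ, pow_add, mul_comm]

end Stmt0AuxD
namespace Stmt0AuxE
open Stmt0Aux Stmt0AuxB Stmt0AuxC Stmt0AuxD

/-- Classification of finite elementary abelian 2-groups. -/
lemma elem_two_group {G : Type*} [CommGroup G] [Finite G] (h2 : ∀ g : G, g * g = 1) {d : ℕ}
    (hcard : Nat.card G = 2^d) : Nonempty (G ≃* (Fin d → Multiplicative (ZMod 2))) := by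
  letI : Module (ZMod 2) (Additive G) := AddCommGroup.zmodModule (by
    intro x
    show 2 • x = 0
    rw [two_nsmul]
    exact congrArg Additive.ofMul (h2 x.toMul))
  haveI : Finite (Additive G) := ‹Finite G›
  haveI : Module.Finite (ZMod 2) (Additive G) := inferInstance
  cases nonempty_fintype (Additive G)
  have hd : Module.finrank (ZMod 2) (Additive G) = d := by
    have hc : Fintype.card (Additive G)
        = Fintype.card (ZMod 2) ^ Module.finrank (ZMod 2) (Additive G) :=
      Module.card_eq_pow_finrank
    rw [ZMod.card 2] at hc
    have hc2 : Nat.card G = 2 ^ Module.finrank (ZMod 2) (Additive G) := by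
      have hng : Nat.card G = Fintype.card (Additive G) := by
        rw [← Nat.card_eq_fintype_card]
        rfl
      rw [hng]
      exact hc
    rw [hcard] at hc2
    exact (Nat.pow_right_injective (le_refl 2) hc2.symm)
  let b := Module.finBasis (ZMod 2) (Additive G)
  let e1 : Additive G ≃ₗ[ZMod 2] (Fin (Module.finrank (ZMod 2) (Additive G)) → ZMod 2) :=
    b.equivFun
  let e2 : (Fin (Module.finrank (ZMod 2) (Additive G)) → ZMod 2) ≃ₗ[ZMod 2]
      (Fin d → ZMod 2) := LinearEquiv.funCongrLeft (ZMod 2) (ZMod 2) (finCongr hd.symm)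
  let e3 : Additive G ≃+ (Fin d → ZMod 2) := (e1.trans e2).toAddEquiv
  exact ⟨(MulEquiv.multiplicativeAdditive G).symm.trans
    ((AddEquiv.toMultiplicative e3).trans (MulEquiv.piMultiplicative (fun _ : Fin d => ZMod 2)))⟩

section Main
variable (n : ℕ) [NeZero n]

lemma addAut_eq_mul {N : ℕ} [NeZero N] (f : AddAut (ZMod N)) (x : ZMod N) :
    f x = x * f 1 := by
  have h0 : x.val • (1 : ZMod N) = x := by
    rw [nsmul_eq_mul, mul_one, ZMod.natCast_val, ZMod.cast_id]
  calc f x = f (x.val • (1 : ZMod N)) := by rw [h0]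
    _ = x.val • f 1 := map_nsmul f _ _
    _ = ((x.val : ℕ) : ZMod N) * f 1 := nsmul_eq_mul _ _
    _ = x * f 1 := by rw [ZMod.natCast_val, ZMod.cast_id]

end Main
end Stmt0AuxE
namespace Stmt0AuxE

lemma val_mul_congr {M : ℕ} [NeZero M] (a x : ZMod M) :
    (M:ℤ) ∣ (((a*x).val:ℤ)) - ((a.val:ℤ) * (x.val:ℤ)) := by
  rw [ZMod.val_mul]
  have h := Nat.mod_add_div (a.val*x.val) M
  refine ⟨-((a.val*x.val / M : ℕ) : ℤ), ?_⟩
  push_cast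
  push_cast at h
  linarith

section N
variable (n : ℕ) [NeZero n]

lemma two_n_pos : 0 < 2*n := by
  have := Nat.pos_of_ne_zero (NeZero.ne n)
  omega

instance : NeZero (2*n) := ⟨(two_n_pos n).ne'⟩

lemma fact_lt : Fact (1 < 2*n) := ⟨by have := Nat.pos_of_ne_zero (NeZero.ne n); omega⟩

lemma cond_iff (f : AddAut (ZMod (2*n))) :
    (∀ x : ZMod (2*n), (4 * (n:ℤ)) ∣ ((f x).val : ℤ)^2 - ((x.val : ℤ))^2) ↔
    (4 * (n:ℤ)) ∣ (((f 1).val : ℤ))^2 - 1 := by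
  haveI := fact_lt n
  constructor
  · intro h
    have h1 := h 1
    rwa [ZMod.val_one, Nat.cast_one, one_pow] at h1
  · intro h x
    have hfx : f x = x * f 1 := addAut_eq_mul f x
    have h1 : ((2*n : ℕ):ℤ) ∣ ((f x).val:ℤ) - ((x.val:ℤ) * ((f 1).val:ℤ)) := by
      rw [hfx]; exact val_mul_congr x (f 1)
    have h2 : 4*(n:ℤ) ∣ ((f x).val:ℤ)^2 - ((x.val:ℤ) * ((f 1).val:ℤ))^2 := by
      have hc : 2*(n:ℤ) ∣ ((f x).val:ℤ) - ((x.val:ℤ) * ((f 1).val:ℤ)) := by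
        push_cast at h1; exact h1
      exact Stmt0Aux.sq_cong hc
    have h3 : 4*(n:ℤ) ∣ ((x.val:ℤ) * ((f 1).val:ℤ))^2 - ((x.val:ℤ))^2 := by
      have heq : ((x.val:ℤ) * ((f 1).val:ℤ))^2 - ((x.val:ℤ))^2
          = (x.val:ℤ)^2 * (((f 1).val:ℤ)^2 - 1) := by ring
      rw [heq]
      exact Dvd.dvd.mul_left h _
    have h4 := dvd_add h2 h3
    have heq2 : ((f x).val:ℤ)^2 - ((x.val:ℤ) * ((f 1).val:ℤ))^2
        + (((x.val:ℤ) * ((f 1).val:ℤ))^2 - ((x.val:ℤ))^2)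
        = ((f x).val:ℤ)^2 - ((x.val:ℤ))^2 := by ring
    rwa [heq2] at h4

lemma sq_one_of_cond {a : ZMod (2*n)} (h : (4 * (n:ℤ)) ∣ ((a.val:ℤ))^2 - 1) :
    a * a = 1 := by
  rw [← Stmt0Aux.val_sq_dvd_iff a]
  refine dvd_trans ?_ h
  exact ⟨2, by push_cast; ring⟩

/-- The subgroup of units satisfying the isometry condition. -/
def U : Subgroup (ZMod (2*n))ˣ where
  carrier := {u | (4 * (n:ℤ)) ∣ (((u : ZMod (2*n)).val : ℤ))^2 - 1}
  one_mem' := by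
    haveI := fact_lt n
    show (4 * (n:ℤ)) ∣ ((((1:(ZMod (2*n))ˣ) : ZMod (2*n)).val : ℤ))^2 - 1
    rw [Units.val_one, ZMod.val_one]
    simp
  mul_mem' := by
    intro u v hu hv
    show (4 * (n:ℤ)) ∣ ((((u*v:(ZMod (2*n))ˣ) : ZMod (2*n)).val : ℤ))^2 - 1
    rw [Units.val_mul]
    have h1 : ((2*n : ℕ):ℤ) ∣ ((((u:ZMod (2*n)) * v).val:ℤ))
        - (((u:ZMod (2*n)).val:ℤ) * ((v:ZMod (2*n)).val:ℤ)) := val_mul_congr _ _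
    have h2 : 4*(n:ℤ) ∣ ((((u:ZMod (2*n)) * v).val:ℤ))^2
        - (((u:ZMod (2*n)).val:ℤ) * ((v:ZMod (2*n)).val:ℤ))^2 := by
      refine Stmt0Aux.sq_cong ?_
      push_cast at h1; exact h1
    have h3 : 4*(n:ℤ) ∣ (((u:ZMod (2*n)).val:ℤ) * ((v:ZMod (2*n)).val:ℤ))^2 - 1 := by
      have heq : (((u:ZMod (2*n)).val:ℤ) * ((v:ZMod (2*n)).val:ℤ))^2 - 1
          = ((u:ZMod (2*n)).val:ℤ)^2 * (((v:ZMod (2*n)).val:ℤ)^2 - 1)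
            + (((u:ZMod (2*n)).val:ℤ)^2 - 1) := by ring
      rw [heq]
      exact dvd_add (Dvd.dvd.mul_left hv _) hu
    have h4 := dvd_add h2 h3
    have heq2 : ((((u:ZMod (2*n)) * v).val:ℤ))^2
        - (((u:ZMod (2*n)).val:ℤ) * ((v:ZMod (2*n)).val:ℤ))^2
        + ((((u:ZMod (2*n)).val:ℤ) * ((v:ZMod (2*n)).val:ℤ))^2 - 1)
        = ((((u:ZMod (2*n)) * v).val:ℤ))^2 - 1 := by ring
    rwa [heq2] at h4
  inv_mem' := by
    intro u hu
    have huu : u * u = 1 := by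
      apply Units.ext
      rw [Units.val_mul, Units.val_one]
      exact sq_one_of_cond n hu
    have hinv : u⁻¹ = u := by
      rw [inv_eq_iff_mul_eq_one, huu]
    show (4 * (n:ℤ)) ∣ (((u⁻¹ : (ZMod (2*n))ˣ) : ZMod (2*n)).val : ℤ)^2 - 1
    rw [hinv]
    exact hu

lemma U_sq (g : ↥(U n)) : g * g = 1 := by
  apply Subtype.ext
  show (g:(ZMod (2*n))ˣ) * g = 1
  apply Units.ext
  rw [Units.val_mul, Units.val_one]
  exact sq_one_of_cond n g.2

lemma card_U (hn : 0 < n) : Nat.card ↥(U n) = 2 ^ n.primeFactors.card := by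
  rw [← Stmt0AuxD.card_S n hn]
  apply Nat.card_congr
  refine ⟨fun g => ⟨((g : (ZMod (2*n))ˣ) : ZMod (2*n)), g.2⟩,
    fun a => ⟨⟨a.1, a.1, sq_one_of_cond n a.2, sq_one_of_cond n a.2⟩, a.2⟩, ?_, ?_⟩
  · intro g; apply Subtype.ext; apply Units.ext; rfl
  · intro a; apply Subtype.ext; rfl

/-- units as additive automorphisms, as a mul equiv -/
noncomputable def PhiE : (ZMod (2*n))ˣ ≃* Multiplicative (AddAut (ZMod (2*n))) := by
  refine MulEquiv.ofBijective (AddAut.mulLeft) ⟨?_, ?_⟩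
  · intro u v h
    apply Units.ext
    have h1 : (Multiplicative.toAdd (AddAut.mulLeft u)) 1
        = (Multiplicative.toAdd (AddAut.mulLeft v)) 1 := by rw [h]
    have h2 : (u : ZMod (2*n)) * 1 = (v : ZMod (2*n)) * 1 := h1
    simpa using h2
  · intro f
    have h1 : (Multiplicative.toAdd f).symm ((Multiplicative.toAdd f) 1) = 1 :=
      (Multiplicative.toAdd f).symm_apply_apply 1
    have h3 : (Multiplicative.toAdd f) 1 * (Multiplicative.toAdd f).symm 1 = 1 := by
      rw [← addAut_eq_mul (Multiplicative.toAdd f).symm ((Multiplicative.toAdd f) 1)]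
      exact h1
    refine ⟨⟨(Multiplicative.toAdd f) 1, (Multiplicative.toAdd f).symm 1, h3, by
      exact (mul_comm _ _).trans h3⟩, ?_⟩
    apply Multiplicative.toAdd.injective
    apply AddEquiv.ext
    intro x
    show (Multiplicative.toAdd f) 1 * x = (Multiplicative.toAdd f) x
    rw [addAut_eq_mul (Multiplicative.toAdd f) x]
    exact mul_comm _ _

lemma mem_map_iff (f : AddAut (ZMod (2*n))) :
    Multiplicative.ofAdd f ∈ Subgroup.map (PhiE n).toMonoidHom (U n) ↔
    (∀ x : ZMod (2*n), (4 * (n:ℤ)) ∣ ((f x).val : ℤ)^2 - ((x.val : ℤ))^2) := by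
  rw [Subgroup.mem_map]
  constructor
  · rintro ⟨u, hu, hfu⟩
    have hf : f = Multiplicative.toAdd ((PhiE n).toMonoidHom u) := by rw [hfu]; rfl
    subst hf
    rw [cond_iff]
    have hval : (Multiplicative.toAdd ((PhiE n).toMonoidHom u)) 1 = (u : ZMod (2*n)) := by
      show (u : ZMod (2*n)) * 1 = (u : ZMod (2*n))
      exact mul_one _
    rw [hval]
    exact hu
  · intro hf
    obtain ⟨u, hu⟩ := (PhiE n).surjective (Multiplicative.ofAdd f)
    refine ⟨u, ?_, hu⟩
    have hval : (u : ZMod (2*n)) = f 1 := by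
      have hf' : f = Multiplicative.toAdd ((PhiE n) u) := by rw [hu]; rfl
      rw [hf']
      exact (mul_one (u : ZMod (2*n))).symm
    show (4 * (n:ℤ)) ∣ (((u : ZMod (2*n))).val : ℤ)^2 - 1
    rw [hval]
    exact (cond_iff n f).mp hf

end N
end Stmt0AuxE

/-- Lemma 3.2: the isometry group of the discriminant form on `Z/2nZ` with
`q(x) = x^2/(2n) mod 2Z` consists of multiplications by `a` with `a^2 ≡ 1 (mod 4n)`,
and is isomorphic to `(Z/2Z)^{ρ(n)}`. -/
theorem stmt_0 (n : ℕ) (hn : 0 < n) :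
    (∀ f : AddAut (ZMod (2 * n)),
      (∀ x : ZMod (2 * n), (4 * n : ℤ) ∣ ((f x).val : ℤ) ^ 2 - (x.val : ℤ) ^ 2) →
      ∃ a : ZMod (2 * n), (∀ x, f x = a * x) ∧ (4 * n : ℤ) ∣ (a.val : ℤ) ^ 2 - 1) ∧
    ∃ H : AddSubgroup (AddAut (ZMod (2 * n))),
      (∀ f, f ∈ H ↔
        ∀ x : ZMod (2 * n), (4 * n : ℤ) ∣ ((f x).val : ℤ) ^ 2 - (x.val : ℤ) ^ 2) ∧
      Nonempty (H ≃+ Additive (Fin n.primeFactors.card → Multiplicative (ZMod 2))) := by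
  haveI : NeZero n := ⟨hn.ne'⟩
  constructor
  · intro f hf
    refine ⟨f 1, fun x => ?_, ?_⟩
    · rw [Stmt0AuxE.addAut_eq_mul f x]
      exact mul_comm _ _
    · exact (Stmt0AuxE.cond_iff n f).mp hf
  · refine ⟨(Subgroup.map (Stmt0AuxE.PhiE n).toMonoidHom (Stmt0AuxE.U n)).toAddSubgroup',
      fun f => ?_, ?_⟩
    · rw [Subgroup.mem_toAddSubgroup']
      exact Stmt0AuxE.mem_map_iff n f
    have hcard := Stmt0AuxE.card_U n hn
    obtain ⟨eiso⟩ := Stmt0AuxE.elem_two_group (Stmt0AuxE.U_sq n) hcard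
    let e1 := ((Stmt0AuxE.PhiE n).subgroupMap (Stmt0AuxE.U n)).symm.trans eiso
    let g : (Subgroup.map (Stmt0AuxE.PhiE n).toMonoidHom (Stmt0AuxE.U n)).toAddSubgroup' →
        (Subgroup.map (Stmt0AuxE.PhiE n).toMonoidHom (Stmt0AuxE.U n)) :=
      fun x => ⟨Multiplicative.ofAdd x.1, (Subgroup.mem_toAddSubgroup' _ _).mp x.2⟩
    refine ⟨{ toFun := fun x => Additive.ofMul (e1 (g x)),
              invFun := fun y => ⟨Multiplicative.toAdd (e1.symm (Additive.toMul y)).1, by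
                rw [Subgroup.mem_toAddSubgroup']; exact (e1.symm (Additive.toMul y)).2⟩,
              left_inv := ?_, right_inv := ?_, map_add' := ?_ }⟩
    · intro x
      apply Subtype.ext
      simp [g]
    · intro y
      simp [g]
    · intro x y
      exact congrArg Additive.ofMul (map_mul e1 (g x) (g y))
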